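/- Let α,β,γ > -1 and define on the triangle T = {(x,y) : x ≥ 0, y ≥ 0, x+y ≤ 1} the polynomials J_{k,n}^{α,β,γ}(x,y) := (x+y)^k J_k^{α,β}((y-x)/(x+y)) J_{n-k}^{2k+α+β+1,γ}(1-2x-2y) for 0 ≤ k ≤ n. Then for (k,n) ≠ (j,m) with 0 ≤ k ≤ n and 0 ≤ j ≤ m, the integral ∫_T J_{k,n}^{α,β,γ}(x,y) J_{j,m}^{α,β,γ}(x,y) x^α y^β (1-x-y)^γ dx dy = 0. -/

import Mathlib

open Finset MeasureTheory

/-- Pochhammer symbol `(a)_m` (rising factorial). -/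
noncomputable def poch (a : ℝ) (m : ℕ) : ℝ := (ascPochhammer ℝ m).eval a

/-- Extended Jacobi polynomial `J_n^{α,β}(t)`.  Terms with vanishing denominator
(which are exactly the terms with index below `ι₀`) are `0` by the division
convention, so this agrees with the paper's definition. -/
noncomputable def J (α β : ℝ) (n : ℕ) (t : ℝ) : ℝ :=
  ∑ k ∈ Finset.range (n + 1),
    poch ((k : ℝ) + α + 1) (n - k) /
      (((n - k).factorial : ℝ) * (k.factorial : ℝ) *
        poch ((n : ℝ) + α + β + (k : ℝ) + 1) (n - k)) *
      ((t - 1) / 2) ^ k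

/-- Classical Jacobi polynomial `P_n^{(α,β)}(t)`. -/
noncomputable def P (α β : ℝ) (n : ℕ) (t : ℝ) : ℝ :=
  ∑ k ∈ Finset.range (n + 1),
    poch ((k : ℝ) + α + 1) (n - k) * poch ((n : ℝ) + α + β + 1) k /
      (((n - k).factorial : ℝ) * (k.factorial : ℝ)) * ((t - 1) / 2) ^ k

/-- The triangle `{(x,y) : x ≥ 0, y ≥ 0, x + y ≤ 1}`. -/
def Tset : Set (ℝ × ℝ) := {p | 0 ≤ p.1 ∧ 0 ≤ p.2 ∧ p.1 + p.2 ≤ 1}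

/-- Jacobi polynomial on the triangle,
`J_{k,n}^{α,β,γ}(x,y) = (x+y)^k J_k^{α,β}((y-x)/(x+y)) J_{n-k}^{2k+α+β+1,γ}(1-2x-2y)`. -/
noncomputable def JT (α β γ : ℝ) (k n : ℕ) (x y : ℝ) : ℝ :=
  (x + y) ^ k * J α β k ((y - x) / (x + y)) *
    J (2 * (k : ℝ) + α + β + 1) γ (n - k) (1 - 2 * x - 2 * y)

open Real Set Polynomial
open scoped fwdDiff

lemma beta_cong {a b : ℝ} {x : ℝ} (hx : x ∈ Set.Icc (0:ℝ) 1) :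
    (x : ℂ) ^ ((a:ℂ) + 1 - 1) * (1 - (x : ℂ)) ^ ((b:ℂ) + 1 - 1)
      = ((x ^ a * (1 - x) ^ b : ℝ) : ℂ) := by
  rw [add_sub_cancel_right, add_sub_cancel_right]
  rw [show (1 : ℂ) - (x:ℂ) = ((1 - x : ℝ) : ℂ) by push_cast; ring]
  rw [← Complex.ofReal_cpow hx.1, ← Complex.ofReal_cpow (by linarith [hx.2])]
  push_cast; ring

lemma beta_integrableOn {a b : ℝ} (ha : -1 < a) (hb : -1 < b) :
    IntegrableOn (fun x : ℝ => x ^ a * (1 - x) ^ b) (Set.Ioo 0 1) := by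
  have h := (Complex.betaIntegral_convergent (u := (a:ℂ)+1) (v := (b:ℂ)+1)
    (by simp; linarith) (by simp; linarith)).1
  have h2 : IntegrableOn (fun x : ℝ => x ^ a * (1 - x) ^ b) (Set.Ioc 0 1) := by
    have := h.re
    refine (this.congr ?_)
    refine (ae_restrict_iff' measurableSet_Ioc).2 (Filter.Eventually.of_forall fun x hx => ?_)
    simp only [beta_cong ⟨hx.1.le, hx.2⟩]
    simp
  exact h2.mono_set Set.Ioo_subset_Ioc_self

lemma beta_value {a b : ℝ} (ha : -1 < a) (hb : -1 < b) :
    ∫ x in Set.Ioo (0:ℝ) 1, x ^ a * (1 - x) ^ b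
      = Gamma (a+1) * Gamma (b+1) / Gamma (a+b+2) := by
  have hG : (0:ℝ) < Gamma (a+b+2) := Gamma_pos_of_pos (by linarith)
  have key := Complex.Gamma_mul_Gamma_eq_betaIntegral (s := (a:ℂ)+1) (t := (b:ℂ)+1)
    (by simp; linarith) (by simp; linarith)
  have hBeta : Complex.betaIntegral ((a:ℂ)+1) ((b:ℂ)+1)
      = ((∫ x in Set.Ioo (0:ℝ) 1, x ^ a * (1 - x) ^ b : ℝ) : ℂ) := by
    rw [Complex.betaIntegral]
    rw [intervalIntegral.integral_congr (g := fun x : ℝ => ((x ^ a * (1 - x) ^ b : ℝ) : ℂ))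
      (fun x hx => beta_cong (by rwa [Set.uIcc_of_le (by norm_num : (0:ℝ) ≤ 1)] at hx))]
    rw [intervalIntegral.integral_ofReal]
    congr 1
    rw [intervalIntegral.integral_of_le (by norm_num : (0:ℝ) ≤ 1),
      MeasureTheory.integral_Ioc_eq_integral_Ioo]
  rw [hBeta] at key
  have : ((a:ℂ)+1) + ((b:ℂ)+1) = ((a+b+2 : ℝ) : ℂ) := by push_cast; ring
  rw [this] at key
  rw [show (a:ℂ) + 1 = ((a+1:ℝ):ℂ) by push_cast; ring,
      show (b:ℂ) + 1 = ((b+1:ℝ):ℂ) by push_cast; ring] at key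
  rw [Complex.Gamma_ofReal, Complex.Gamma_ofReal, Complex.Gamma_ofReal] at key
  have key2 : Gamma (a+1) * Gamma (b+1)
      = Gamma (a+b+2) * ∫ x in Set.Ioo (0:ℝ) 1, x ^ a * (1 - x) ^ b := by
    exact_mod_cast key
  field_simp
  linarith [key2]


lemma poch_zero (a : ℝ) : poch a 0 = 1 := by simp [poch]

lemma poch_succ (a : ℝ) (m : ℕ) : poch a (m+1) = poch a m * (a + m) := by
  simp [poch, ascPochhammer_succ_right, Polynomial.eval_mul]

lemma poch_eq_Gamma {x : ℝ} (hx : 0 < x) (m : ℕ) :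
    poch x m = Gamma (x + m) / Gamma x := by
  induction m with
  | zero => simp [poch_zero]; rw [div_self (Gamma_pos_of_pos hx).ne']
  | succ m ih =>
    have hxm : (0:ℝ) < x + m := by positivity
    rw [poch_succ, ih, show x + (↑(m+1)) = (x + m) + 1 by push_cast; ring,
      Real.Gamma_add_one hxm.ne']
    field_simp

lemma poch_pos {x : ℝ} (hx : 0 < x) (m : ℕ) : 0 < poch x m := by
  rw [poch_eq_Gamma hx]
  exact div_pos (Gamma_pos_of_pos (by positivity)) (Gamma_pos_of_pos hx)

section mono
variable {a b : ℝ} (ha : -1 < a) (hb : -1 < b)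

lemma mono_cong (r : ℕ) {u : ℝ} (hu : u ∈ Set.Ioo (0:ℝ) 1) :
    (-u)^r * (u ^ a * (1-u) ^ b) = (-1:ℝ)^r * (u ^ (a + r) * (1-u) ^ b) := by
  rw [show a + (r:ℝ) = a + (r:ℝ) from rfl, Real.rpow_add hu.1, Real.rpow_natCast]
  ring

include ha hb in
lemma intMon (r : ℕ) :
    IntegrableOn (fun u : ℝ => (-u)^r * (u ^ a * (1-u) ^ b)) (Set.Ioo 0 1) := by
  have h := ((beta_integrableOn (a := a + r) (b := b)
    (by push_cast; linarith) hb).const_mul ((-1:ℝ)^r))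
  refine (IntegrableOn.congr_fun h (fun u hu => (mono_cong r hu).symm) measurableSet_Ioo)

include ha hb in
lemma valMon (r : ℕ) :
    ∫ u in Set.Ioo (0:ℝ) 1, (-u)^r * (u ^ a * (1-u) ^ b)
      = (-1:ℝ)^r * (Gamma (a+r+1) * Gamma (b+1) / Gamma (a+b+r+2)) := by
  rw [setIntegral_congr_fun measurableSet_Ioo
    (fun u hu => mono_cong r hu)]
  rw [integral_const_mul, beta_value (by push_cast; linarith) hb]
  rw [show a + (r:ℝ) + 1 = a + r + 1 from rfl]
  ring_nf
end mono


lemma fwdDiff_eval (p : Polynomial ℝ) :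
    Δ_[(1:ℝ)] (fun y : ℝ => p.eval y) = fun y : ℝ => (p.comp (X + C 1) - p).eval y := by
  funext y
  simp [fwdDiff, Polynomial.eval_comp]

lemma degree_fwd_lt (p : Polynomial ℝ) (hp : p.comp (X + C 1) - p ≠ 0) :
    (p.comp (X + C 1) - p).degree < p.degree := by
  have hp0 : p ≠ 0 := by rintro rfl; simp at hp
  have hlc : (p.comp (X + C 1)).leadingCoeff = p.leadingCoeff := by
    rw [Polynomial.leadingCoeff_comp (by rw [Polynomial.natDegree_X_add_C]; norm_num),
      Polynomial.leadingCoeff_X_add_C, one_pow, mul_one]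
  have hc0 : p.comp (X + C 1) ≠ 0 := by
    intro h
    apply hp0
    rw [← Polynomial.leadingCoeff_eq_zero, ← hlc, h, Polynomial.leadingCoeff_zero]
  have hnd : (p.comp (X + C 1)).natDegree = p.natDegree := by
    rw [Polynomial.natDegree_comp, Polynomial.natDegree_X_add_C, mul_one]
  have hdeg : (p.comp (X + C 1)).degree = p.degree := by
    rw [Polynomial.degree_eq_natDegree hc0, Polynomial.degree_eq_natDegree hp0, hnd]
  have := Polynomial.degree_sub_lt hdeg hc0 hlc
  rwa [hdeg] at this

lemma fwdDiff_iter_poly_zero : ∀ (n : ℕ) (p : Polynomial ℝ), p.degree < (n : ℕ) →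
    ∀ x : ℝ, (Δ_[(1:ℝ)])^[n] (fun y : ℝ => p.eval y) x = 0 := by
  intro n
  induction n with
  | zero =>
    intro p hp x
    have h0 : p = 0 := Polynomial.degree_eq_bot.1 (Nat.WithBot.lt_zero_iff.1 (by simpa using hp))
    subst h0; simp
  | succ n ih =>
    intro p hp x
    rw [Function.iterate_succ_apply, fwdDiff_eval]
    by_cases h0 : p.comp (X + C 1) - p = 0
    · rw [h0]
      simp only [Polynomial.eval_zero]
      rw [Function.iterate_fixed (by simpa using fwdDiff_const (1:ℝ) (0:ℝ)) n]
    · refine ih _ ?_ x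
      have hp0 : p ≠ 0 := by rintro rfl; simp at h0
      have h1 : (p.comp (X + C 1) - p).natDegree < p.natDegree := by
        have := degree_fwd_lt p h0
        rwa [Polynomial.degree_eq_natDegree h0, Polynomial.degree_eq_natDegree hp0,
          Nat.cast_lt] at this
      have h2 : p.natDegree < n + 1 := by
        rwa [Polynomial.natDegree_lt_iff_degree_lt hp0, Nat.cast_add, Nat.cast_one]
      rw [← Polynomial.natDegree_lt_iff_degree_lt h0]
      omega

lemma alt_sum_poly (n : ℕ) (p : Polynomial ℝ) (hp : p.degree < (n : ℕ)) :
    ∑ k ∈ Finset.range (n+1), ((-1:ℝ))^k * (n.choose k : ℝ) * p.eval (k : ℝ) = 0 := by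
  have h := fwdDiff_iter_eq_sum_shift (1:ℝ) (fun y : ℝ => p.eval y) n 0
  rw [fwdDiff_iter_poly_zero n p hp 0] at h
  have h2 : ∑ k ∈ Finset.range (n+1),
      ((-1:ℝ))^(n-k) * (n.choose k : ℝ) * p.eval (k : ℝ) = 0 := by
    rw [show (0:ℝ) = ∑ k ∈ Finset.range (n+1),
        (((-1:ℤ)) ^ (n - k) * (n.choose k : ℤ)) • p.eval ((0:ℝ) + k • (1:ℝ)) from h]
    refine Finset.sum_congr rfl fun k hk => ?_
    rw [zsmul_eq_mul]
    push_cast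
    ring_nf
  calc ∑ k ∈ Finset.range (n+1), ((-1:ℝ))^k * (n.choose k : ℝ) * p.eval (k : ℝ)
      = ∑ k ∈ Finset.range (n+1), (-1:ℝ)^n *
          (((-1:ℝ))^(n-k) * (n.choose k : ℝ) * p.eval (k : ℝ)) := by
        refine Finset.sum_congr rfl fun k hk => ?_
        have hkn : k ≤ n := Nat.lt_succ_iff.1 (Finset.mem_range.1 hk)
        have hsign : (-1:ℝ)^n * (-1:ℝ)^(n-k) = (-1:ℝ)^k := by
          rw [← pow_add, show n + (n - k) = 2*(n-k) + k by omega, pow_add, pow_mul]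
          norm_num
        calc ((-1:ℝ))^k * (n.choose k : ℝ) * p.eval (k : ℝ)
            = ((-1:ℝ)^n * (-1:ℝ)^(n-k)) * (n.choose k : ℝ) * p.eval (k : ℝ) := by rw [hsign]
          _ = (-1:ℝ)^n * (((-1:ℝ))^(n-k) * (n.choose k : ℝ) * p.eval (k : ℝ)) := by ring
    _ = (-1:ℝ)^n * ∑ k ∈ Finset.range (n+1),
          ((-1:ℝ))^(n-k) * (n.choose k : ℝ) * p.eval (k : ℝ) := by rw [Finset.mul_sum]
    _ = 0 := by rw [h2, mul_zero]



noncomputable def coef (a b : ℝ) (n i : ℕ) : ℝ :=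
  poch ((i:ℝ)+a+1) (n-i) /
    (((n-i).factorial : ℝ) * (i.factorial : ℝ) * poch ((n:ℝ)+a+b+(i:ℝ)+1) (n-i))

lemma alg (a b : ℝ) (ha : -1 < a) (hb : -1 < b) (n i : ℕ) (hin : i < n) :
    ∑ k ∈ Finset.range (n+1), coef a b n k *
      ((-1:ℝ)^k * (Gamma (a+k+i+1) * Gamma (b+1) / Gamma (a+b+k+i+2))) = 0 := by
  have hn1 : 1 ≤ n := by omega
  set p : Polynomial ℝ := ((ascPochhammer ℝ i).comp (X + C (a+1))) *
    ((ascPochhammer ℝ (n-1-i)).comp (X + C (a+b+(i:ℝ)+2))) with hp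
  have hdegp : p.degree < (n : ℕ) := by
    have e1 : ((ascPochhammer ℝ i).comp (X + C (a+1))).natDegree = i := by
      rw [Polynomial.natDegree_comp, ascPochhammer_natDegree,
        Polynomial.natDegree_X_add_C, mul_one]
    have e2 : ((ascPochhammer ℝ (n-1-i)).comp (X + C (a+b+(i:ℝ)+2))).natDegree = n-1-i := by
      rw [Polynomial.natDegree_comp, ascPochhammer_natDegree,
        Polynomial.natDegree_X_add_C, mul_one]
    have h1 : p.natDegree ≤ i + (n-1-i) := by
      refine le_trans (Polynomial.natDegree_mul_le) ?_
      rw [e1, e2]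
    refine lt_of_le_of_lt (Polynomial.degree_le_natDegree) ?_
    exact_mod_cast (by omega : p.natDegree < n)
  have peval : ∀ k : ℕ, p.eval (k:ℝ)
      = poch ((k:ℝ)+(a+1)) i * poch ((k:ℝ)+(a+b+(i:ℝ)+2)) (n-1-i) := by
    intro k
    simp [hp, poch, Polynomial.eval_comp]
  set Cst : ℝ := Gamma ((n:ℝ)+a+1) * Gamma (b+1) /
    (Gamma (2*(n:ℝ)+a+b+1) * (n.factorial:ℝ)) with hCst
  have key : ∀ k ∈ Finset.range (n+1), coef a b n k *
      ((-1:ℝ)^k * (Gamma (a+k+i+1) * Gamma (b+1) / Gamma (a+b+k+i+2)))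
      = Cst * ((-1:ℝ)^k * (n.choose k : ℝ) * p.eval (k:ℝ)) := by
    intro k hk
    have hkn : k ≤ n := Nat.lt_succ_iff.1 (Finset.mem_range.1 hk)
    have hn' : (1:ℝ) ≤ (n:ℝ) := by exact_mod_cast hn1
    have hk0 : (0:ℝ) ≤ (k:ℝ) := Nat.cast_nonneg k
    have hi0 : (0:ℝ) ≤ (i:ℝ) := Nat.cast_nonneg i
    have hpos1 : (0:ℝ) < (k:ℝ)+a+1 := by linarith
    have hpos2 : (0:ℝ) < (n:ℝ)+a+b+(k:ℝ)+1 := by linarith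
    have hpos3 : (0:ℝ) < (k:ℝ)+(a+b+(i:ℝ)+2) := by linarith
    have h1 : poch ((k:ℝ)+a+1) (n-k) = Gamma ((n:ℝ)+a+1) / Gamma ((k:ℝ)+a+1) := by
      rw [poch_eq_Gamma hpos1]
      congr 2
      rw [Nat.cast_sub hkn]; ring
    have h2 : poch ((n:ℝ)+a+b+(k:ℝ)+1) (n-k)
        = Gamma (2*(n:ℝ)+a+b+1) / Gamma ((n:ℝ)+a+b+(k:ℝ)+1) := by
      rw [poch_eq_Gamma hpos2]
      congr 2
      rw [Nat.cast_sub hkn]; ring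
    have h3 : Gamma (a+(k:ℝ)+(i:ℝ)+1) = Gamma ((k:ℝ)+a+1) * poch ((k:ℝ)+(a+1)) i := by
      rw [poch_eq_Gamma (by linarith : (0:ℝ) < (k:ℝ)+(a+1))]
      rw [show (k:ℝ)+(a+1)+(i:ℝ) = a+(k:ℝ)+(i:ℝ)+1 by ring,
        show (k:ℝ)+(a+1) = (k:ℝ)+a+1 by ring]
      field_simp [(Gamma_pos_of_pos hpos1).ne']
    have h4 : Gamma ((n:ℝ)+a+b+(k:ℝ)+1)
        = Gamma ((k:ℝ)+(a+b+(i:ℝ)+2)) * poch ((k:ℝ)+(a+b+(i:ℝ)+2)) (n-1-i) := by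
      rw [poch_eq_Gamma hpos3]
      rw [show (k:ℝ)+(a+b+(i:ℝ)+2)+((n-1-i:ℕ):ℝ) = (n:ℝ)+a+b+(k:ℝ)+1 by
        rw [Nat.cast_sub (by omega), Nat.cast_sub (by omega)]; push_cast; ring]
      field_simp [(Gamma_pos_of_pos hpos3).ne']
    have h5 : Gamma (a+b+(k:ℝ)+(i:ℝ)+2) = Gamma ((k:ℝ)+(a+b+(i:ℝ)+2)) := by
      congr 1; ring
    have hch : ((n.choose k : ℝ)) * (k.factorial:ℝ) * ((n-k).factorial:ℝ)
        = (n.factorial:ℝ) := by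
      exact_mod_cast congrArg (Nat.cast : ℕ → ℝ)
        (Nat.choose_mul_factorial_mul_factorial hkn)
    rw [coef, peval, h1, h2, h3, h4, h5]
    have hG1 := (Gamma_pos_of_pos hpos1).ne'
    have hG2 := (Gamma_pos_of_pos hpos2).ne'
    have hG3 := (Gamma_pos_of_pos hpos3).ne'
    have hG4 := (Gamma_pos_of_pos (show (0:ℝ) < 2*(n:ℝ)+a+b+1 by linarith)).ne'
    have hf1 : ((n-k).factorial:ℝ) ≠ 0 := Nat.cast_ne_zero.2 (Nat.factorial_ne_zero _)
    have hf2 : ((k).factorial:ℝ) ≠ 0 := Nat.cast_ne_zero.2 (Nat.factorial_ne_zero _)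
    have hf3 : ((n).factorial:ℝ) ≠ 0 := Nat.cast_ne_zero.2 (Nat.factorial_ne_zero _)
    rw [hCst]
    have hP2 : poch ((k:ℝ)+(a+b+(i:ℝ)+2)) (n-1-i) ≠ 0 := (poch_pos hpos3 _).ne'
    field_simp
    rw [← hch]
    ring
  rw [Finset.sum_congr rfl key, ← Finset.mul_sum, alt_sum_poly n p hdegp, mul_zero]


lemma Jexpand (a b : ℝ) (n : ℕ) (u : ℝ) :
    J a b n (1 - 2*u) = ∑ i ∈ Finset.range (n+1), coef a b n i * (-u)^i := by
  unfold J coef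
  refine Finset.sum_congr rfl fun i _ => ?_
  rw [show (1 - 2*u - 1)/2 = -u by ring]

lemma intJmon {a b : ℝ} (ha : -1 < a) (hb : -1 < b) (q i : ℕ) :
    IntegrableOn (fun u : ℝ => J a b q (1-2*u) * ((-u)^i * (u ^ a * (1-u) ^ b)))
      (Set.Ioo 0 1) := by
  have : ∀ u : ℝ, J a b q (1-2*u) * ((-u)^i * (u ^ a * (1-u) ^ b))
      = ∑ k ∈ Finset.range (q+1), coef a b q k * ((-u)^(k+i) * (u ^ a * (1-u) ^ b)) := by
    intro u
    rw [Jexpand, Finset.sum_mul]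
    refine Finset.sum_congr rfl fun k _ => ?_
    rw [pow_add]; ring
  have hint : IntegrableOn (fun u : ℝ => ∑ k ∈ Finset.range (q+1),
      coef a b q k * ((-u)^(k+i) * (u ^ a * (1-u) ^ b))) (Set.Ioo 0 1) :=
    integrable_finset_sum _ (fun k _ => ((intMon ha hb (k+i)).const_mul _))
  exact hint.congr (Filter.Eventually.of_forall fun u => (this u).symm)

lemma Mom {a b : ℝ} (ha : -1 < a) (hb : -1 < b) {n i : ℕ} (hin : i < n) :
    ∫ u in Set.Ioo (0:ℝ) 1, J a b n (1-2*u) * ((-u)^i * (u ^ a * (1-u) ^ b)) = 0 := by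
  have heq : ∀ u : ℝ, J a b n (1-2*u) * ((-u)^i * (u ^ a * (1-u) ^ b))
      = ∑ k ∈ Finset.range (n+1), coef a b n k * ((-u)^(k+i) * (u ^ a * (1-u) ^ b)) := by
    intro u
    rw [Jexpand, Finset.sum_mul]
    refine Finset.sum_congr rfl fun k _ => ?_
    rw [pow_add]; ring
  rw [setIntegral_congr_fun measurableSet_Ioo (fun u _ => heq u)]
  rw [integral_finset_sum _ (fun k _ => ((intMon ha hb (k+i)).const_mul _))]
  have : ∀ k ∈ Finset.range (n+1),
      ∫ u in Set.Ioo (0:ℝ) 1, coef a b n k * ((-u)^(k+i) * (u ^ a * (1-u) ^ b))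
      = (-1:ℝ)^i * (coef a b n k *
        ((-1:ℝ)^k * (Gamma (a+k+i+1) * Gamma (b+1) / Gamma (a+b+k+i+2)))) := by
    intro k _
    rw [integral_const_mul, valMon ha hb (k+i)]
    rw [pow_add]
    push_cast
    ring_nf
  rw [Finset.sum_congr rfl this, ← Finset.mul_sum, alg a b ha hb n i hin, mul_zero]

lemma Jorth {a b : ℝ} (ha : -1 < a) (hb : -1 < b) {p q : ℕ} (hpq : p ≠ q) :
    ∫ u in Set.Ioo (0:ℝ) 1,
      J a b p (1-2*u) * J a b q (1-2*u) * (u ^ a * (1-u) ^ b) = 0 := by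
  wlog h : p < q generalizing p q
  · have h' : q < p := by omega
    calc ∫ u in Set.Ioo (0:ℝ) 1, J a b p (1-2*u) * J a b q (1-2*u) * (u ^ a * (1-u) ^ b)
        = ∫ u in Set.Ioo (0:ℝ) 1, J a b q (1-2*u) * J a b p (1-2*u) * (u ^ a * (1-u) ^ b) :=
          setIntegral_congr_fun measurableSet_Ioo (fun u _ => by ring)
      _ = 0 := this hpq.symm h'
  have heq : ∀ u : ℝ, J a b p (1-2*u) * J a b q (1-2*u) * (u ^ a * (1-u) ^ b)
      = ∑ i ∈ Finset.range (p+1), coef a b p i *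
          (J a b q (1-2*u) * ((-u)^i * (u ^ a * (1-u) ^ b))) := by
    intro u
    rw [Jexpand a b p, Finset.sum_mul, Finset.sum_mul]
    refine Finset.sum_congr rfl fun i _ => ?_
    ring
  rw [setIntegral_congr_fun measurableSet_Ioo (fun u _ => heq u)]
  rw [integral_finset_sum _ (fun i _ => ((intJmon ha hb q i).const_mul _))]
  refine Finset.sum_eq_zero fun i hi => ?_
  rw [integral_const_mul, Mom ha hb (by
    have := Finset.mem_range.1 hi; omega), mul_zero]


def Tri : Set (ℝ × ℝ) := {p | 0 < p.1 ∧ 0 < p.2 ∧ p.1 + p.2 < 1}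

noncomputable def phi : ℝ × ℝ → ℝ × ℝ := fun q => (q.1 * q.2, q.1 - q.1 * q.2)

noncomputable def phiD (p : ℝ × ℝ) : (ℝ × ℝ) →L[ℝ] (ℝ × ℝ) :=
  LinearMap.toContinuousLinearMap (Matrix.toLin (Module.Basis.finTwoProd ℝ) (Module.Basis.finTwoProd ℝ)
    !![p.2, p.1; 1 - p.2, -p.1])

theorem hasFDerivAt_phi (p : ℝ × ℝ) : HasFDerivAt phi (phiD p) p := by
  unfold phi phiD
  rw [Matrix.toLin_finTwoProd_toContinuousLinearMap]
  refine (HasFDerivAt.prodMk (𝕜 := ℝ) ((hasFDerivAt_fst (𝕜 := ℝ) (p := p)).fun_mul (hasFDerivAt_snd (𝕜 := ℝ) (p := p)))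
    ((hasFDerivAt_fst (𝕜 := ℝ) (p := p)).fun_sub ((hasFDerivAt_fst (𝕜 := ℝ) (p := p)).fun_mul (hasFDerivAt_snd (𝕜 := ℝ) (p := p))))).congr_fderiv ?_
  ext v <;> simp [ContinuousLinearMap.smul_apply] <;> ring

theorem phiD_det (p : ℝ × ℝ) : (phiD p).det = -p.1 := by
  unfold phiD
  simp only [LinearMap.det_toContinuousLinearMap, LinearMap.det_toLin,
    Matrix.det_fin_two_of]
  ring

theorem phi_image : phi '' (Set.Ioo (0:ℝ) 1 ×ˢ Set.Ioo (0:ℝ) 1) = Tri := by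
  ext ⟨x, y⟩
  constructor
  · rintro ⟨⟨s, u⟩, ⟨hs, hu⟩, heq⟩
    simp only [Set.mem_Ioo] at hs hu
    simp only [phi, Prod.mk.injEq] at heq
    obtain ⟨hx, hy⟩ := heq
    subst hx; subst hy
    exact ⟨show (0:ℝ) < s*u from mul_pos hs.1 hu.1,
      show (0:ℝ) < s - s*u by nlinarith [hs.1, hs.2, hu.1, hu.2],
      show s*u + (s - s*u) < 1 by nlinarith [hs.1, hs.2, hu.1, hu.2]⟩
  · rintro ⟨hx, hy, hxy⟩
    refine ⟨(x + y, x / (x + y)), ⟨?_, ?_⟩, ?_⟩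
    · exact Set.mem_Ioo.2 ⟨by linarith, hxy⟩
    · exact Set.mem_Ioo.2 ⟨div_pos hx (by linarith), (div_lt_one (by linarith)).2 (by linarith)⟩
    · have h0 : x + y ≠ 0 := by positivity
      simp only [phi]
      rw [mul_div_cancel₀ _ h0]
      exact Prod.ext rfl (by ring)

theorem phi_injOn : Set.InjOn phi (Set.Ioo (0:ℝ) 1 ×ˢ Set.Ioo (0:ℝ) 1) := by
  rintro ⟨s, u⟩ ⟨hs, _⟩ ⟨s', u'⟩ ⟨hs', _⟩ h
  simp only [phi, Prod.mk.injEq] at h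
  have hss : s = s' := by linarith [h.1, h.2]
  subst hss
  have : u = u' := by
    have hs0 : s ≠ 0 := ne_of_gt (Set.mem_Ioo.1 hs).1
    exact mul_left_cancel₀ hs0 h.1
  simp [this]

theorem Tset_convex : Convex ℝ Tset := by
  have h1 : Convex ℝ {p : ℝ × ℝ | 0 ≤ p.1} :=
    convex_halfSpace_ge ⟨fun _ _ => rfl, fun _ _ => rfl⟩ 0
  have h2 : Convex ℝ {p : ℝ × ℝ | 0 ≤ p.2} :=
    convex_halfSpace_ge ⟨fun _ _ => rfl, fun _ _ => rfl⟩ 0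
  have h3 : Convex ℝ {p : ℝ × ℝ | p.1 + p.2 ≤ 1} :=
    convex_halfSpace_le ⟨fun p q => by simp only [Prod.fst_add, Prod.snd_add]; ring, fun c p => by simp [smul_eq_mul]; ring⟩ 1
  exact fun x hx y hy a b ha hb hab =>
    ⟨h1 hx.1 hy.1 ha hb hab, h2 hx.2.1 hy.2.1 ha hb hab, h3 hx.2.2 hy.2.2 ha hb hab⟩

theorem Tset_ae_Tri : (Tset : Set (ℝ × ℝ)) =ᵐ[volume] Tri := by
  have hsub : Tset \ Tri ⊆ frontier Tset := by
    rintro ⟨x, y⟩ ⟨⟨hx, hy, hxy⟩, hni⟩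
    refine ⟨subset_closure ⟨hx, hy, hxy⟩, fun hint => ?_⟩
    rw [mem_interior_iff_mem_nhds, Metric.mem_nhds_iff] at hint
    obtain ⟨ε, hε, hball⟩ := hint
    simp only [Tri, Set.mem_setOf_eq, not_and_or, not_lt] at hni
    have hd : ∀ z : ℝ × ℝ, dist z (x, y) < ε → z ∈ Tset := fun z hz => hball hz
    rcases hni with h | h | h
    · have hx0 : x = 0 := le_antisymm h hx
      have := hd (x - ε/2, y) (by
        rw [Prod.dist_eq]
        simp [Real.dist_eq, abs_of_nonneg hε.le]
        linarith)
      have : (0:ℝ) ≤ x - ε/2 := this.1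
      linarith
    · have hy0 : y = 0 := le_antisymm h hy
      have := hd (x, y - ε/2) (by
        rw [Prod.dist_eq]
        simp [Real.dist_eq, abs_of_nonneg hε.le]
        linarith)
      have : (0:ℝ) ≤ y - ε/2 := this.2.1
      linarith
    · have hxy1 : x + y = 1 := le_antisymm hxy h
      have := hd (x + ε/2, y) (by
        rw [Prod.dist_eq]
        simp [Real.dist_eq, abs_of_nonneg hε.le]
        linarith)
      have : x + ε/2 + y ≤ 1 := this.2.2
      linarith
  have hnull : volume (Tset \ Tri) = 0 :=
    measure_mono_null hsub (Tset_convex.addHaar_frontier volume)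
  rw [MeasureTheory.ae_eq_set]
  refine ⟨hnull, ?_⟩
  have hTT : Tri \ Tset = ∅ := by
    ext ⟨x, y⟩
    constructor
    · rintro ⟨⟨hx, hy, hxy⟩, hn⟩
      exact hn ⟨hx.le, hy.le, hxy.le⟩
    · exact fun h => absurd h (Set.notMem_empty _)
  rw [hTT]
  simp

section main
variable (α β γ : ℝ) (k n j m : ℕ)

noncomputable def Gu : ℝ → ℝ := fun u =>
  J α β k (1-2*u) * J α β j (1-2*u) * (u ^ α * (1-u) ^ β)

noncomputable def Fs : ℝ → ℝ := fun s =>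
  s ^ ((k:ℝ)+(j:ℝ)+α+β+1) * (1-s) ^ γ *
    (J (2*(k:ℝ)+α+β+1) γ (n-k) (1-2*s) * J (2*(j:ℝ)+α+β+1) γ (m-j) (1-2*s))

lemma pointwise {s u : ℝ} (hs : s ∈ Set.Ioo (0:ℝ) 1) (hu : u ∈ Set.Ioo (0:ℝ) 1) :
    |(phiD (s,u)).det| • (JT α β γ k n (phi (s,u)).1 (phi (s,u)).2 *
        JT α β γ j m (phi (s,u)).1 (phi (s,u)).2 *
      ((phi (s,u)).1 ^ α * (phi (s,u)).2 ^ β *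
        (1 - (phi (s,u)).1 - (phi (s,u)).2) ^ γ))
      = Fs α β γ k n j m s * Gu α β k j u := by
  obtain ⟨hs0, hs1⟩ := hs
  obtain ⟨hu0, hu1⟩ := hu
  have h1 : s*u + (s - s*u) = s := by ring
  simp only [phi, phiD_det, smul_eq_mul]
  rw [abs_neg, abs_of_pos hs0]
  unfold JT
  rw [h1]
  rw [show s - s*u - s*u = s*(1-2*u) by ring, mul_div_cancel_left₀ _ (ne_of_gt hs0)]
  rw [show 1 - 2*(s*u) - 2*(s - s*u) = 1 - 2*s by ring]
  rw [show s - s*u = s*(1-u) by ring]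
  rw [Real.mul_rpow hs0.le hu0.le, Real.mul_rpow hs0.le (by linarith : (0:ℝ) ≤ 1-u)]
  rw [show 1 - s*u - s*(1-u) = 1 - s by ring]
  have hpow : s ^ ((k:ℝ)+(j:ℝ)+α+β+1) = s^k * s^j * s^α * s^β * s := by
    rw [show (k:ℝ)+(j:ℝ)+α+β+1 = (k:ℝ)+((j:ℝ)+(α+(β+1))) by ring]
    rw [Real.rpow_add hs0, Real.rpow_add hs0, Real.rpow_add hs0, Real.rpow_add hs0,
      Real.rpow_natCast, Real.rpow_natCast, Real.rpow_one]
    ring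
  unfold Fs Gu
  rw [hpow]
  ring

end main

theorem stmt12 (α β γ : ℝ) (hα : -1 < α) (hβ : -1 < β) (hγ : -1 < γ)
    (k n j m : ℕ) (hk : k ≤ n) (hj : j ≤ m) (hne : (k, n) ≠ (j, m)) :
    ∫ p in Tset, JT α β γ k n p.1 p.2 * JT α β γ j m p.1 p.2 *
      (p.1 ^ α * p.2 ^ β * (1 - p.1 - p.2) ^ γ) = 0 := by
  have hsq : MeasurableSet (Set.Ioo (0:ℝ) 1 ×ˢ Set.Ioo (0:ℝ) 1) :=
    measurableSet_Ioo.prod measurableSet_Ioo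
  rw [setIntegral_congr_set Tset_ae_Tri, ← phi_image,
    integral_image_eq_integral_abs_det_fderiv_smul volume hsq
      (fun x _ => (hasFDerivAt_phi x).hasFDerivWithinAt) phi_injOn]
  rw [setIntegral_congr_fun hsq (fun p hp => by
    obtain ⟨hp1, hp2⟩ := hp
    exact pointwise α β γ k n j m hp1 hp2)]
  rw [MeasureTheory.Measure.volume_eq_prod,
    MeasureTheory.setIntegral_prod_mul (Fs α β γ k n j m) (Gu α β k j)]
  by_cases hkj : k = j
  · subst hkj
    have hnm : n ≠ m := by
      intro h; exact hne (by rw [h])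
    have hFs : ∫ s in Set.Ioo (0:ℝ) 1, Fs α β γ k n k m s = 0 := by
      have ha' : -1 < 2*(k:ℝ)+α+β+1 := by
        have : (0:ℝ) ≤ (k:ℝ) := Nat.cast_nonneg k
        linarith
      calc ∫ s in Set.Ioo (0:ℝ) 1, Fs α β γ k n k m s
          = ∫ s in Set.Ioo (0:ℝ) 1, J (2*(k:ℝ)+α+β+1) γ (n-k) (1-2*s) *
              J (2*(k:ℝ)+α+β+1) γ (m-k) (1-2*s) *
              (s ^ (2*(k:ℝ)+α+β+1) * (1-s) ^ γ) := by
            refine setIntegral_congr_fun measurableSet_Ioo (fun s _ => ?_)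
            unfold Fs
            rw [show (k:ℝ)+(k:ℝ)+α+β+1 = 2*(k:ℝ)+α+β+1 by ring]
            ring
        _ = 0 := Jorth ha' hγ (p := n-k) (q := m-k) (by omega)
    rw [hFs, zero_mul]
  · have hGu : ∫ u in Set.Ioo (0:ℝ) 1, Gu α β k j u = 0 := Jorth hα hβ hkj
    rw [hGu, mul_zero]
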